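/- arXiv:2202.06676 — 4 statements merged into one kernel-verified Lean document; each statement's English description precedes it below -/
import Mathlib

section
/- Let g = [[a,b],[c,d]] ∈ SL₂(ℤ) and N a positive integer. Then an element T^n·γ with γ ∈ Γ(N) lies in Γ₁(N) ∩ g⁻¹Γ₁(N)g if and only if n_g divides n, where n_g = lcm(N/gcd(N,ac), N/gcd(N,c²)). Equivalently, (Γ₁(N) ∩ g⁻¹Γ₁(N)g)/Γ(N) = T^{n_g ℤ}·Γ(N)/Γ(N). -/
open CongruenceSubgroup

lemma aux_div (N : ℕ) (hN : 0 < N) (m k : ℕ) :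
    N / Nat.gcd N m ∣ k ↔ N ∣ m * k := by
  set d := Nat.gcd N m with hd
  have hdpos : 0 < d := Nat.gcd_pos_of_pos_left m hN
  have hdN : d ∣ N := Nat.gcd_dvd_left N m
  have hdm : d ∣ m := Nat.gcd_dvd_right N m
  have hco : Nat.Coprime (N / d) (m / d) := Nat.coprime_div_gcd_div_gcd hdpos
  have h1 : N = d * (N / d) := (Nat.mul_div_cancel' hdN).symm
  have h2 : m = d * (m / d) := (Nat.mul_div_cancel' hdm).symm
  constructor
  · intro h
    rw [h1, h2, mul_assoc, Nat.mul_dvd_mul_iff_left hdpos]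
    exact Dvd.dvd.mul_left h _
  · intro h
    rw [h1, h2, mul_assoc, Nat.mul_dvd_mul_iff_left hdpos] at h
    exact hco.dvd_of_dvd_mul_left h

lemma aux_int (N : ℕ) (hN : 0 < N) (m n : ℤ) :
    ((N / Int.gcd N m : ℕ) : ℤ) ∣ n ↔ (N : ℤ) ∣ m * n := by
  rw [Int.natCast_dvd, Int.natCast_dvd, Int.natAbs_mul, Int.gcd]
  simp only [Int.natAbs_natCast]
  exact aux_div N hN m.natAbs n.natAbs

/-- For `g = [[a,b],[c,d]] ∈ SL₂(ℤ)` and `N > 0`, an element `T^n·γ` with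
`γ ∈ Γ(N)` lies in `Γ₁(N) ∩ g⁻¹Γ₁(N)g` if and only if `n_g ∣ n`, where
`n_g = lcm(N/gcd(N,ac), N/gcd(N,c²))`.  (Consequently
`(Γ₁(N) ∩ g⁻¹Γ₁(N)g)/Γ(N) = T^{n_g ℤ}·Γ(N)/Γ(N)`.) -/
theorem mem_gamma1_inter_conj_iff (N : ℕ) (hN : 0 < N)
    (g : Matrix.SpecialLinearGroup (Fin 2) ℤ) (n : ℤ)
    (γ : Matrix.SpecialLinearGroup (Fin 2) ℤ) (hγ : γ ∈ Gamma N) :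
    ModularGroup.T ^ n * γ ∈ Gamma1 N ⊓ (Gamma1 N).map (MulAut.conj g⁻¹).toMonoidHom ↔
      ((Nat.lcm (N / Int.gcd N (g 0 0 * g 1 0)) (N / Int.gcd N (g 1 0 ^ 2)) : ℤ) ∣ n) := by
  obtain ⟨h1, h2, h3, h4⟩ := Gamma_mem.mp hγ
  have hT1 : ModularGroup.T ^ n * γ ∈ Gamma1 N := by
    rw [Gamma1_mem]
    simp only [Matrix.SpecialLinearGroup.coe_mul, ModularGroup.coe_T_zpow, Matrix.mul_apply,
      Fin.sum_univ_two]
    push_cast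
    simp [h1, h2, h3, h4, Matrix.cons_val_zero, Matrix.cons_val_one]
  have hR : ((Nat.lcm (N / Int.gcd N (g 0 0 * g 1 0)) (N / Int.gcd N (g 1 0 ^ 2)) : ℕ) : ℤ) ∣ n ↔
      (((g 0 0 * g 1 0 * n : ℤ) : ZMod N) = 0 ∧ ((g 1 0 ^ 2 * n : ℤ) : ZMod N) = 0) := by
    rw [Int.natCast_dvd, Nat.lcm_dvd_iff, ← Int.natCast_dvd, ← Int.natCast_dvd,
      aux_int N hN, aux_int N hN, ← ZMod.intCast_zmod_eq_zero_iff_dvd,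
      ← ZMod.intCast_zmod_eq_zero_iff_dvd]
  have hdet : ((g 0 0 : ℤ) : ZMod N) * ((g 1 1 : ℤ) : ZMod N)
      - ((g 0 1 : ℤ) : ZMod N) * ((g 1 0 : ℤ) : ZMod N) = 1 := by
    have hg := g.2
    rw [Matrix.det_fin_two] at hg
    have := congrArg (fun z : ℤ => (z : ZMod N)) hg
    push_cast at this
    exact this
  rw [Subgroup.mem_inf, and_iff_right hT1, Subgroup.mem_map_equiv, MulAut.conj_symm_apply,
    inv_inv, Gamma1_mem, hR]
  simp only [Matrix.SpecialLinearGroup.coe_mul, Matrix.SpecialLinearGroup.coe_inv,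
    Matrix.adjugate_fin_two]
  simp only [Matrix.SpecialLinearGroup.coe_mul, Matrix.SpecialLinearGroup.SL2_inv_expl,
    Matrix.SpecialLinearGroup.coe_mk, ModularGroup.coe_T_zpow, Matrix.mul_apply,
    Fin.sum_univ_two, Matrix.of_apply, Matrix.cons_val', Matrix.cons_val_zero,
    Matrix.cons_val_one, Matrix.head_cons, Matrix.empty_val', Matrix.cons_val_fin_one,
    Matrix.head_fin_const]
  push_cast
  simp only [h1, h2, h3, h4, mul_one, mul_zero, zero_mul, add_zero, zero_add, one_mul]
  constructor
  · rintro ⟨e1, e2, e3⟩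
    constructor
    · linear_combination hdet - e1
    · linear_combination -e3
  · rintro ⟨e1, e2⟩
    refine ⟨?_, ?_, ?_⟩
    · linear_combination hdet - e1
    · linear_combination hdet + e1
    · linear_combination -e2
end

section
/- Let g ∈ SL₂(ℤ) and N a positive integer. The quotient set Γ₁(N)/(Γ₁(N) ∩ g⁻¹Γ₁(N)g) is in bijection with ℤ/n_gℤ, where n_g = lcm(N/gcd(N,ac), N/gcd(N,c²)) for g = [[a,b],[c,d]]. In particular, the index [Γ₁(N) : Γ₁(N) ∩ g⁻¹Γ₁(N)g] equals n_g. -/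
open CongruenceSubgroup

open Matrix Matrix.SpecialLinearGroup CongruenceSubgroup MatrixGroups

lemma aux_nat_dvd {N : ℕ} (hN : 0 < N) (m x : ℕ) : N ∣ m * x ↔ N / Nat.gcd N m ∣ x := by
  set d := Nat.gcd N m with hd
  have hd0 : 0 < d := Nat.gcd_pos_of_pos_left m hN
  have h1 : d * (N / d) = N := Nat.mul_div_cancel' (Nat.gcd_dvd_left N m)
  have h2 : d * (m / d) = m := Nat.mul_div_cancel' (Nat.gcd_dvd_right N m)
  constructor
  · intro h
    have h3 : d * (N / d) ∣ d * ((m / d) * x) := by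
      rw [← mul_assoc, h2, h1]; exact h
    have h4 : N / d ∣ (m / d) * x := (mul_dvd_mul_iff_left hd0.ne').mp h3
    exact (Nat.coprime_div_gcd_div_gcd hd0).dvd_of_dvd_mul_left h4
  · intro h
    calc N = d * (N / d) := h1.symm
    _ ∣ m * x := mul_dvd_mul (Nat.gcd_dvd_right N m) h

lemma aux_int_dvd {N : ℕ} (hN : 0 < N) (m x : ℤ) :
    (N : ℤ) ∣ m * x ↔ ((N / Int.gcd N m : ℕ) : ℤ) ∣ x := by
  have h1 : Int.gcd N m = Nat.gcd N m.natAbs := by simp [Int.gcd]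
  rw [h1, ← Int.natAbs_dvd_natAbs, ← Int.natAbs_dvd_natAbs (b := x)]
  simp only [Int.natAbs_mul, Int.natAbs_natCast]
  exact aux_nat_dvd hN m.natAbs x.natAbs

lemma aux_cast_down {n N : ℕ} (h : n ∣ N) {x : ℤ} (hx : (x : ZMod N) = 1) :
    (x : ZMod n) = 1 := by
  have h0 : ((x - 1 : ℤ) : ZMod N) = 0 := by push_cast [hx]; ring
  rw [ZMod.intCast_zmod_eq_zero_iff_dvd] at h0
  have h2 : (n : ℤ) ∣ x - 1 := dvd_trans (Int.natCast_dvd_natCast.mpr h) h0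
  have h3 := (ZMod.intCast_zmod_eq_zero_iff_dvd _ n).mpr h2
  push_cast at h3
  linear_combination h3

lemma aux_conj_mem (N : ℕ) (g A : SL(2,ℤ)) (hA : A ∈ Gamma1 N) :
    g * A * g⁻¹ ∈ Gamma1 N ↔
      ((g 0 0 * g 1 0 * A 0 1 : ℤ) : ZMod N) = 0 ∧ ((g 1 0 ^ 2 * A 0 1 : ℤ) : ZMod N) = 0 := by
  rw [Gamma1_mem] at hA ⊢
  obtain ⟨hA00, hA11, hA10⟩ := hA
  have hdet : g 0 0 * g 1 1 - g 0 1 * g 1 0 = 1 := by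
    have := g.2; rwa [Matrix.det_fin_two] at this
  have hdetN : ((g 0 0 : ℤ) : ZMod N) * (g 1 1 : ℤ) - (g 0 1 : ℤ) * (g 1 0 : ℤ) = 1 := by
    have := congrArg (fun z : ℤ => (z : ZMod N)) hdet
    push_cast at this; exact this
  have e00 : ((g * A * g⁻¹) 0 0 : ℤ) =
      g 0 0 * A 0 0 * g 1 1 + g 0 1 * A 1 0 * g 1 1
        - g 0 0 * A 0 1 * g 1 0 - g 0 1 * A 1 1 * g 1 0 := by
    simp [Matrix.SpecialLinearGroup.coe_inv, Matrix.adjugate_fin_two, Matrix.mul_apply, Fin.sum_univ_two]; ring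
  have e11 : ((g * A * g⁻¹) 1 1 : ℤ) =
      - (g 1 0 * A 0 0 * g 0 1) - g 1 1 * A 1 0 * g 0 1
        + g 1 0 * A 0 1 * g 0 0 + g 1 1 * A 1 1 * g 0 0 := by
    simp [Matrix.SpecialLinearGroup.coe_inv, Matrix.adjugate_fin_two, Matrix.mul_apply, Fin.sum_univ_two]; ring
  have e10 : ((g * A * g⁻¹) 1 0 : ℤ) =
      g 1 0 * A 0 0 * g 1 1 + g 1 1 * A 1 0 * g 1 1
        - g 1 0 * A 0 1 * g 1 0 - g 1 1 * A 1 1 * g 1 0 := by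
    simp [Matrix.SpecialLinearGroup.coe_inv, Matrix.adjugate_fin_two, Matrix.mul_apply, Fin.sum_univ_two]; ring
  have k00 : (((g * A * g⁻¹) 0 0 : ℤ) : ZMod N) = 1 - ((g 0 0 * g 1 0 * A 0 1 : ℤ) : ZMod N) := by
    rw [e00]; push_cast
    linear_combination ((g 0 0 : ℤ) : ZMod N) * (g 1 1 : ℤ) * hA00
      + ((g 0 1 : ℤ) : ZMod N) * (g 1 1 : ℤ) * hA10
      - ((g 0 1 : ℤ) : ZMod N) * (g 1 0 : ℤ) * hA11 + hdetN
  have k11 : (((g * A * g⁻¹) 1 1 : ℤ) : ZMod N) = 1 + ((g 0 0 * g 1 0 * A 0 1 : ℤ) : ZMod N) := by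
    rw [e11]; push_cast
    linear_combination (-(((g 1 0 : ℤ) : ZMod N) * (g 0 1 : ℤ))) * hA00
      - ((g 1 1 : ℤ) : ZMod N) * (g 0 1 : ℤ) * hA10
      + ((g 1 1 : ℤ) : ZMod N) * (g 0 0 : ℤ) * hA11 + hdetN
  have k10 : (((g * A * g⁻¹) 1 0 : ℤ) : ZMod N) = - ((g 1 0 ^ 2 * A 0 1 : ℤ) : ZMod N) := by
    rw [e10]; push_cast
    linear_combination ((g 1 0 : ℤ) : ZMod N) * (g 1 1 : ℤ) * hA00
      + ((g 1 1 : ℤ) : ZMod N) * (g 1 1 : ℤ) * hA10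
      - ((g 1 1 : ℤ) : ZMod N) * (g 1 0 : ℤ) * hA11
  rw [k00, k11, k10]
  constructor
  · rintro ⟨h1, _, h3⟩
    exact ⟨by linear_combination -h1, by linear_combination -h3⟩
  · rintro ⟨h1, h2⟩
    exact ⟨by rw [h1]; ring, by rw [h1]; ring, by rw [h2]; ring⟩

/-- The homomorphism from `Gamma1 N` to `ZMod n` (for `n ∣ N`) given by the
upper-right entry. -/
def aux_gammaHom (N n : ℕ) (hnN : n ∣ N) : Gamma1 N →* Multiplicative (ZMod n) where
  toFun γ := Multiplicative.ofAdd ((((γ : SL(2,ℤ)) 0 1 : ℤ)) : ZMod n)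
  map_one' := by
    have : ((1 : Gamma1 N) : SL(2,ℤ)) 0 1 = 0 := by simp
    simp [this]
  map_mul' γ δ := by
    have hγ := (Gamma1_mem N _).mp γ.2
    have hδ := (Gamma1_mem N _).mp δ.2
    have h1 : (((γ : SL(2,ℤ)) 0 0 : ℤ) : ZMod n) = 1 := aux_cast_down hnN hγ.1
    have h2 : (((δ : SL(2,ℤ)) 1 1 : ℤ) : ZMod n) = 1 := aux_cast_down hnN hδ.2.1
    have e : ((↑(γ * δ) : SL(2,ℤ)) 0 1 : ℤ) =
        (γ : SL(2,ℤ)) 0 0 * (δ : SL(2,ℤ)) 0 1 + (γ : SL(2,ℤ)) 0 1 * (δ : SL(2,ℤ)) 1 1 := by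
      simp [Matrix.mul_apply, Fin.sum_univ_two]
    show Multiplicative.ofAdd ((((γ * δ : Gamma1 N) : SL(2,ℤ)) 0 1 : ℤ) : ZMod n) =
      Multiplicative.ofAdd (((γ : SL(2,ℤ)) 0 1 : ℤ) : ZMod n) *
        Multiplicative.ofAdd (((δ : SL(2,ℤ)) 0 1 : ℤ) : ZMod n)
    rw [← ofAdd_add, e]
    congr 1
    push_cast
    rw [h1, h2]
    ring


/-- For `g = [[a,b],[c,d]] ∈ SL₂(ℤ)` and `N > 0`, the quotient
`Γ₁(N)/(Γ₁(N) ∩ g⁻¹Γ₁(N)g)` is in bijection with `ℤ/n_gℤ` where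
`n_g = lcm(N/gcd(N,ac), N/gcd(N,c²))`; in particular the index of
`Γ₁(N) ∩ g⁻¹Γ₁(N)g` in `Γ₁(N)` equals `n_g`. -/
theorem gamma1_mod_inter_conj_equiv_zmod (N : ℕ) (hN : 0 < N) (g : Matrix.SpecialLinearGroup (Fin 2) ℤ) :
    Nonempty ((Gamma1 N ⧸
        ((Gamma1 N ⊓ (Gamma1 N).map (MulAut.conj g⁻¹).toMonoidHom).subgroupOf (Gamma1 N))) ≃
      ZMod (Nat.lcm (N / Int.gcd N (g 0 0 * g 1 0)) (N / Int.gcd N (g 1 0 ^ 2)))) ∧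
    ((Gamma1 N ⊓ (Gamma1 N).map (MulAut.conj g⁻¹).toMonoidHom).subgroupOf (Gamma1 N)).index =
      Nat.lcm (N / Int.gcd N (g 0 0 * g 1 0)) (N / Int.gcd N (g 1 0 ^ 2)) := by
  set n1 := N / Int.gcd N (g 0 0 * g 1 0) with hn1
  set n2 := N / Int.gcd N (g 1 0 ^ 2) with hn2
  set n := Nat.lcm n1 n2 with hn
  have hg1 : (Int.gcd N (g 0 0 * g 1 0) : ℕ) ∣ N := by
    have : Int.gcd N (g 0 0 * g 1 0) = Nat.gcd N (g 0 0 * g 1 0).natAbs := by simp [Int.gcd]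
    rw [this]; exact Nat.gcd_dvd_left _ _
  have hg2 : (Int.gcd N (g 1 0 ^ 2) : ℕ) ∣ N := by
    have : Int.gcd N (g 1 0 ^ 2) = Nat.gcd N (g 1 0 ^ 2).natAbs := by simp [Int.gcd]
    rw [this]; exact Nat.gcd_dvd_left _ _
  have hn1N : n1 ∣ N := Nat.div_dvd_of_dvd hg1
  have hn2N : n2 ∣ N := Nat.div_dvd_of_dvd hg2
  have hnN : n ∣ N := Nat.lcm_dvd hn1N hn2N
  have hn1pos : 0 < n1 := Nat.div_pos (Nat.le_of_dvd hN hg1) (Nat.pos_of_dvd_of_pos hg1 hN)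
  have hn2pos : 0 < n2 := Nat.div_pos (Nat.le_of_dvd hN hg2) (Nat.pos_of_dvd_of_pos hg2 hN)
  have hnpos : 0 < n := Nat.pos_of_ne_zero (Nat.lcm_ne_zero hn1pos.ne' hn2pos.ne')
  haveI : NeZero n := ⟨hnpos.ne'⟩
  set φ := aux_gammaHom N n hnN with hφ
  -- the subgroup is the kernel of φ
  have hlcm : ∀ x : ℤ, (n : ℤ) ∣ x ↔ (n1 : ℤ) ∣ x ∧ (n2 : ℤ) ∣ x := by
    intro x
    rw [← Int.natAbs_dvd_natAbs, ← Int.natAbs_dvd_natAbs (a := (n1 : ℤ)),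
      ← Int.natAbs_dvd_natAbs (a := (n2 : ℤ))]
    simp only [Int.natAbs_natCast]
    exact Nat.lcm_dvd_iff
  have hker : ((Gamma1 N ⊓ (Gamma1 N).map (MulAut.conj g⁻¹).toMonoidHom).subgroupOf (Gamma1 N))
      = φ.ker := by
    ext γ
    have step1 : ((γ : SL(2,ℤ)) ∈ (Gamma1 N).map (MulAut.conj g⁻¹).toMonoidHom) ↔
        g * (γ : SL(2,ℤ)) * g⁻¹ ∈ Gamma1 N := by
      rw [Subgroup.mem_map_equiv]
      have : (MulAut.conj g⁻¹).symm (γ : SL(2,ℤ)) = g * (γ : SL(2,ℤ)) * g⁻¹ := by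
        rw [MulAut.conj_symm_apply, inv_inv]
      rw [this]
    rw [Subgroup.mem_subgroupOf, Subgroup.mem_inf, step1,
      aux_conj_mem N g (γ : SL(2,ℤ)) γ.2, MonoidHom.mem_ker]
    simp only [γ.2, true_and]
    have hphi : φ γ = Multiplicative.ofAdd ((((γ : SL(2,ℤ)) 0 1 : ℤ)) : ZMod n) := rfl
    rw [hphi, ofAdd_eq_one, ZMod.intCast_zmod_eq_zero_iff_dvd,
      ZMod.intCast_zmod_eq_zero_iff_dvd, ZMod.intCast_zmod_eq_zero_iff_dvd,
      aux_int_dvd hN, aux_int_dvd hN, ← hn1, ← hn2, ← hlcm]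
  have hsurj : Function.Surjective φ := by
    intro k
    set m := (Multiplicative.toAdd k).val with hm
    have hmem : (ModularGroup.T ^ (m : ℤ)) ∈ Gamma1 N := by
      rw [Gamma1_mem, ModularGroup.coe_T_zpow]
      simp
    refine ⟨⟨_, hmem⟩, ?_⟩
    have hphi : φ ⟨_, hmem⟩ =
        Multiplicative.ofAdd ((((ModularGroup.T ^ (m : ℤ) : SL(2,ℤ)) 0 1 : ℤ)) : ZMod n) := rfl
    rw [hphi, ModularGroup.coe_T_zpow]
    simp only [Matrix.cons_val', Matrix.cons_val_zero, Matrix.cons_val_one, Matrix.head_cons,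
      Matrix.empty_val', Matrix.cons_val_fin_one, Matrix.of_apply]
    have : (((m : ℤ)) : ZMod n) = Multiplicative.toAdd k := by
      push_cast
      exact ZMod.natCast_rightInverse _
    rw [this]
    rfl
  rw [hker]
  constructor
  · exact ⟨((QuotientGroup.quotientKerEquivOfSurjective φ hsurj).toEquiv.trans
      Multiplicative.toAdd)⟩
  · rw [Subgroup.index_eq_card,
      Nat.card_congr ((QuotientGroup.quotientKerEquivOfSurjective φ hsurj).toEquiv.trans
        Multiplicative.toAdd),
      Nat.card_zmod]
end

section
/- Let ρ be a finite-dimensional representation of SL₂(ℤ) of level N (kernel contains Γ(N)) and N₀ a multiple of N. Then dim H⁰(ρ_{N₀}^∨ ⊗ ρ_{N₀}^∨ ⊗ ρ) ≤ #(Γ₁(N₀)\SL₂(ℤ)/Γ₁(N₀)) · dim(ρ), where ρ_{N₀} = Ind_{Γ₁(N₀)}^{SL₂(ℤ)} 𝟙. -/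
open CategoryTheory MonoidalCategory CongruenceSubgroup

local notation "SL2Z" => Matrix.SpecialLinearGroup (Fin 2) ℤ

/-- The permutation representation `ρ_{N₀} = Ind_{Γ₁(N₀)}^{SL₂(ℤ)} 𝟙` of `SL₂(ℤ)` on the
coset space `SL₂(ℤ)/Γ₁(N₀)`. -/
noncomputable def rhoInd (N₀ : ℕ) :
    Representation ℂ SL2Z ((SL2Z ⧸ Gamma1 N₀) →₀ ℂ) :=
  { toFun := fun g => Finsupp.lmapDomain ℂ ℂ (g • ·)
    map_one' := by ext; simp
    map_mul' := fun x y => by ext; simp [mul_smul] }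

/-- permutation representation on `X →₀ ℂ` -/
noncomputable def permRep (G : Type) [Group G] (X : Type) [MulAction G X] :
    Representation ℂ G (X →₀ ℂ) :=
  { toFun := fun g => Finsupp.lmapDomain ℂ ℂ (g • ·)
    map_one' := by ext; simp
    map_mul' := fun x y => by ext; simp [mul_smul] }

lemma permRep_single {G : Type} [Group G] {X : Type} [MulAction G X] (g : G) (x : X) (r : ℂ) :
    permRep G X g (Finsupp.single x r) = Finsupp.single (g • x) r := by
  show Finsupp.mapDomain (g • ·) (Finsupp.single x r) = _
  exact Finsupp.mapDomain_single

lemma permRep_apply {G : Type} [Group G] {X : Type} [MulAction G X] (g : G) (f : X →₀ ℂ)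
    (x : X) : permRep G X g f x = f (g⁻¹ • x) := by
  show Finsupp.mapDomain (g • ·) f x = _
  have := Finsupp.mapDomain_apply (MulAction.injective g) f (g⁻¹ • x)
  simpa using this


section General


variable {G : Type} [Group G] (Γ : Subgroup G) {V : Type} [AddCommGroup V] [Module ℂ V]
  (ρ : Representation ℂ G V)

local notation "WW" => (TensorProduct ℂ (Module.Dual ℂ ((G ⧸ Γ) →₀ ℂ)) (TensorProduct ℂ (Module.Dual ℂ ((G ⧸ Γ) →₀ ℂ)) V))

/-- The big tensor representation. -/
noncomputable abbrev bigRep : Rep ℂ G :=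
  (Rep.of (permRep G (G ⧸ Γ)).dual ⊗
    (Rep.of (permRep G (G ⧸ Γ)).dual ⊗ Rep.of ρ))

/-- Evaluation of an element of `A∨ ⊗ A∨ ⊗ V` at a pair of basis vectors. -/
noncomputable def evP (q₁ q₂ : G ⧸ Γ) :
    WW →ₗ[ℂ] V :=
  LinearMap.applyₗ (Finsupp.single q₂ (1:ℂ)) ∘ₗ dualTensorHom ℂ ((G ⧸ Γ) →₀ ℂ) V ∘ₗ
    LinearMap.applyₗ (Finsupp.single q₁ (1:ℂ)) ∘ₗ dualTensorHom ℂ ((G ⧸ Γ) →₀ ℂ) (TensorProduct ℂ (Module.Dual ℂ ((G ⧸ Γ) →₀ ℂ)) V)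

lemma evP_tmul (q₁ q₂ : G ⧸ Γ) (φ ψ : Module.Dual ℂ ((G ⧸ Γ) →₀ ℂ)) (v : V) :
    evP Γ q₁ q₂ (φ ⊗ₜ[ℂ] (ψ ⊗ₜ[ℂ] v)) = φ (Finsupp.single q₁ 1) • ψ (Finsupp.single q₂ 1) • v := by
  simp [evP, dualTensorHom_apply, smul_smul, mul_comm]

lemma evP_rho (g : G) (q₁ q₂ : G ⧸ Γ) (w : WW) :
    evP Γ q₁ q₂ ((bigRep Γ ρ).ρ g w) = ρ g (evP Γ (g⁻¹ • q₁) (g⁻¹ • q₂) w) := by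
  induction w using TensorProduct.induction_on with
  | zero => simp
  | add x y hx hy => simp only [map_add, hx, hy]
  | tmul φ z =>
    induction z using TensorProduct.induction_on with
    | zero => simp [TensorProduct.tmul_zero]
    | add x y hx hy => simp only [TensorProduct.tmul_add, map_add, hx, hy]
    | tmul ψ v =>
      show evP Γ q₁ q₂
        ((permRep G (G ⧸ Γ)).dual g φ ⊗ₜ[ℂ]
          ((permRep G (G ⧸ Γ)).dual g ψ ⊗ₜ[ℂ] ρ g v)) = _
      rw [evP_tmul, evP_tmul]
      simp only [Representation.dual_apply, Module.Dual.transpose_apply, LinearMap.comp_apply,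
        permRep_single, map_smul]

lemma evP_invariant {w : WW}
    (hw : ∀ g : G, (bigRep Γ ρ).ρ g w = w) (g : G) (q₁ q₂ : G ⧸ Γ) :
    evP Γ (g • q₁) (g • q₂) w = ρ g (evP Γ q₁ q₂ w) := by
  have h2 := evP_rho Γ ρ g (g • q₁) (g • q₂) w
  rw [hw g, inv_smul_smul, inv_smul_smul] at h2
  exact h2

lemma evP_eq_zero [Finite (G ⧸ Γ)]
    {w : WW}
    (h : ∀ q₁ q₂ : G ⧸ Γ, evP Γ q₁ q₂ w = 0) : w = 0 := by
  classical
  haveI : Fintype (G ⧸ Γ) := Fintype.ofFinite _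
  have b : Module.Basis (G ⧸ Γ) ℂ ((G ⧸ Γ) →₀ ℂ) := Finsupp.basisSingleOne
  have h1 : dualTensorHom ℂ ((G ⧸ Γ) →₀ ℂ) (TensorProduct ℂ (Module.Dual ℂ ((G ⧸ Γ) →₀ ℂ)) V) w = 0 := by
    apply Finsupp.lhom_ext' (fun q₁ => ?_)
    ext
    simp only [LinearMap.comp_apply, Finsupp.lsingle_apply, LinearMap.zero_apply]
    have h2 : dualTensorHom ℂ ((G ⧸ Γ) →₀ ℂ) V
        (dualTensorHom ℂ ((G ⧸ Γ) →₀ ℂ) (TensorProduct ℂ (Module.Dual ℂ ((G ⧸ Γ) →₀ ℂ)) V) w (Finsupp.single q₁ 1)) = 0 := by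
      apply Finsupp.lhom_ext' (fun q₂ => ?_)
      ext
      simpa [evP] using h q₁ q₂
    have := congrArg (dualTensorHomEquivOfBasis (N := V) b).symm h2
    rwa [dualTensorHomEquivOfBasis_symm_cancel_left, map_zero] at this
  have := congrArg (dualTensorHomEquivOfBasis (N := TensorProduct ℂ (Module.Dual ℂ ((G ⧸ Γ) →₀ ℂ)) V) b).symm h1
  rwa [dualTensorHomEquivOfBasis_symm_cancel_left, map_zero] at this

theorem main_fin [Finite (G ⧸ Γ)] [FiniteDimensional ℂ V] :
    Module.finrank ℂ ((bigRep Γ ρ).ρ.invariants) ≤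
      Nat.card (DoubleCoset.Quotient (↑Γ : Set G) (↑Γ : Set G)) * Module.finrank ℂ V := by
  classical
  -- Doset quotient is finite
  have hsurj : Function.Surjective
      (fun q : G ⧸ Γ => DoubleCoset.mk Γ Γ q.out : (G ⧸ Γ) → DoubleCoset.Quotient (↑Γ : Set G) ↑Γ) := by
    intro d
    refine ⟨QuotientGroup.mk d.out, ?_⟩
    show DoubleCoset.mk Γ Γ (QuotientGroup.mk (s := Γ) d.out).out = d
    have h1 : (QuotientGroup.mk (QuotientGroup.mk (s := Γ) d.out).out : G ⧸ Γ)
        = QuotientGroup.mk d.out := QuotientGroup.out_eq' _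
    rw [QuotientGroup.eq] at h1
    have h2 : DoubleCoset.mk Γ Γ ((QuotientGroup.mk (s := Γ) d.out).out) = DoubleCoset.mk Γ Γ d.out := by
      rw [DoubleCoset.eq]
      exact ⟨1, Γ.one_mem, _, h1, by group⟩
    rw [h2, DoubleCoset.out_eq']
  have : Finite (DoubleCoset.Quotient (↑Γ : Set G) (↑Γ : Set G)) := Finite.of_surjective _ hsurj
  have : Fintype (DoubleCoset.Quotient (↑Γ : Set G) (↑Γ : Set G)) := Fintype.ofFinite _
  -- the injection
  set D := DoubleCoset.Quotient (↑Γ : Set G) (↑Γ : Set G)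
  let L : ((bigRep Γ ρ).ρ.invariants) →ₗ[ℂ] (D → V) :=
    LinearMap.pi (fun d => evP Γ (QuotientGroup.mk 1) (QuotientGroup.mk d.out) ∘ₗ
      ((bigRep Γ ρ).ρ.invariants).subtype)
  have key : ∀ x : (TensorProduct ℂ (Module.Dual ℂ ((G ⧸ Γ) →₀ ℂ))
        (TensorProduct ℂ (Module.Dual ℂ ((G ⧸ Γ) →₀ ℂ)) V)),
      (∀ g : G, (bigRep Γ ρ).ρ g x = x) →
      (∀ d : D, evP Γ (QuotientGroup.mk 1) (QuotientGroup.mk d.out) x = 0) →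
      ∀ q₁ q₂ : G ⧸ Γ, evP Γ q₁ q₂ x = 0 := by
    intro x hinv hzero q₁ q₂
    induction q₁ using QuotientGroup.induction_on with | H a =>
    induction q₂ using QuotientGroup.induction_on with | H b =>
    set d : D := DoubleCoset.mk Γ Γ (a⁻¹ * b)
    have hd : DoubleCoset.mk Γ Γ d.out = d := DoubleCoset.out_eq' _ _ _
    rw [DoubleCoset.eq] at hd
    obtain ⟨h, hh, k, hk, hab⟩ := hd
    have e1 : (QuotientGroup.mk (a⁻¹ * b) : G ⧸ Γ) = h • QuotientGroup.mk d.out := by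
      rw [hab, MulAction.Quotient.smul_mk, smul_eq_mul]
      exact QuotientGroup.mk_mul_of_mem _ hk
    have e2 : (QuotientGroup.mk 1 : G ⧸ Γ) = h • QuotientGroup.mk 1 := by
      rw [MulAction.Quotient.smul_mk]
      rw [QuotientGroup.eq]
      simpa using hh
    have e3 : evP Γ (QuotientGroup.mk 1) (QuotientGroup.mk (a⁻¹ * b)) x = 0 := by
      rw [e1, e2, evP_invariant Γ ρ hinv, hzero d, map_zero]
    have e4 : (QuotientGroup.mk a : G ⧸ Γ) = a • QuotientGroup.mk 1 := by
      rw [MulAction.Quotient.smul_mk, smul_eq_mul, mul_one]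
    have e5 : (QuotientGroup.mk b : G ⧸ Γ) = a • QuotientGroup.mk (a⁻¹ * b) := by
      rw [MulAction.Quotient.smul_mk, smul_eq_mul, ← mul_assoc, mul_inv_cancel, one_mul]
    rw [e4, e5, evP_invariant Γ ρ hinv, e3, map_zero]
  have hL : Function.Injective L := by
    rw [← LinearMap.ker_eq_bot, LinearMap.ker_eq_bot']
    intro w hw
    have hw' : ∀ d : D, evP Γ (QuotientGroup.mk 1) (QuotientGroup.mk d.out) w.1 = 0 :=
      fun d => congrFun hw d
    exact Subtype.ext (evP_eq_zero Γ (key w.1 w.2 hw'))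
  calc Module.finrank ℂ ((bigRep Γ ρ).ρ.invariants)
      ≤ Module.finrank ℂ (D → V) := LinearMap.finrank_le_finrank_of_injective hL
    _ = Nat.card D * Module.finrank ℂ V := by
        rw [Module.finrank_pi_fintype, Finset.sum_const, Nat.card_eq_fintype_card,
          Finset.card_univ, smul_eq_mul]

end General


lemma castdown {K M : ℕ} (h : K ∣ M) {x y : ℤ} (hx : (x : ZMod M) = (y : ZMod M)) :
    (x : ZMod K) = (y : ZMod K) := by
  rw [ZMod.intCast_eq_intCast_iff] at hx ⊢
  exact hx.of_dvd (Int.natCast_dvd_natCast.2 h)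

lemma castdown1 {K M : ℕ} (h : K ∣ M) {x : ℤ} (hx : (x : ZMod M) = 1) : (x : ZMod K) = 1 := by
  have h2 : (x : ZMod M) = ((1:ℤ) : ZMod M) := by simpa using hx
  simpa using castdown h h2

lemma castdown0 {K M : ℕ} (h : K ∣ M) {x : ℤ} (hx : (x : ZMod M) = 0) : (x : ZMod K) = 0 := by
  have h2 : (x : ZMod M) = ((0:ℤ) : ZMod M) := by simpa using hx
  simpa using castdown h h2

lemma Gamma_le_Gamma {K M : ℕ} (h : K ∣ M) : Gamma M ≤ Gamma K := by
  intro γ hγ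
  rw [Gamma_mem] at hγ ⊢
  refine ⟨?_, ?_, ?_, ?_⟩
  · exact castdown1 h hγ.1
  · exact castdown0 h hγ.2.1
  · exact castdown0 h hγ.2.2.1
  · exact castdown1 h hγ.2.2.2

lemma Gamma1_le_Gamma1' {K M : ℕ} (h : K ∣ M) : Gamma1 M ≤ Gamma1 K := by
  intro γ hγ
  rw [Gamma1_mem] at hγ ⊢
  refine ⟨?_, ?_, ?_⟩
  · exact castdown1 h hγ.1
  · exact castdown1 h hγ.2.1
  · exact castdown0 h hγ.2.2

lemma Gamma_le_Gamma1 (M : ℕ) : Gamma M ≤ Gamma1 M := by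
  intro γ hγ
  rw [Gamma_mem] at hγ
  rw [Gamma1_mem]
  exact ⟨hγ.1, hγ.2.2.2, hγ.2.2.1⟩

lemma finite_quotient_gamma (M : ℕ) [NeZero M] : Finite (SL2Z ⧸ Gamma M) := by
  have : Finite (SL2Z ⧸ (Matrix.SpecialLinearGroup.map (n := Fin 2) (Int.castRingHom (ZMod M))).ker) := by
    exact Finite.of_equiv _ (QuotientGroup.quotientKerEquivRange _).symm.toEquiv
  exact this

lemma finite_quotient_of_gamma_le (M : ℕ) [NeZero M] (Γ : Subgroup SL2Z) (h : Gamma M ≤ Γ) :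
    Finite (SL2Z ⧸ Γ) := by
  haveI := finite_quotient_gamma M
  have hs : Function.Surjective
      (fun q : SL2Z ⧸ Gamma M => (QuotientGroup.mk q.out : SL2Z ⧸ Γ)) := by
    intro q
    refine ⟨QuotientGroup.mk q.out, ?_⟩
    have h1 : (QuotientGroup.mk (QuotientGroup.mk (s := Gamma M) q.out).out : SL2Z ⧸ Gamma M)
        = QuotientGroup.mk q.out := QuotientGroup.out_eq' _
    rw [QuotientGroup.eq] at h1
    show (QuotientGroup.mk (QuotientGroup.mk (s := Gamma M) q.out).out : SL2Z ⧸ Γ) = q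
    rw [QuotientGroup.eq .. |>.mpr (h h1)]
    exact QuotientGroup.out_eq' q
  exact Finite.of_surjective _ hs


/-- The matrix `[1, 0; c, 1]` as an element of `SL(2, ℤ)`. -/
def gmat (c : ℤ) : SL2Z :=
  ⟨!![1, 0; c, 1], by simp [Matrix.det_fin_two_of]⟩

@[simp] lemma gmat_00 : (gmat c : Matrix (Fin 2) (Fin 2) ℤ) 0 0 = 1 := rfl
@[simp] lemma gmat_01 : (gmat c : Matrix (Fin 2) (Fin 2) ℤ) 0 1 = 0 := rfl
@[simp] lemma gmat_10 : (gmat c : Matrix (Fin 2) (Fin 2) ℤ) 1 0 = c := rfl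
@[simp] lemma gmat_11 : (gmat c : Matrix (Fin 2) (Fin 2) ℤ) 1 1 = 1 := rfl

lemma gmat_mul (c c' : ℤ) : gmat c * gmat c' = gmat (c + c') := by
  ext i j
  fin_cases i <;> fin_cases j <;> rw [Matrix.SpecialLinearGroup.coe_mul] <;>
    simp [gmat, Matrix.SpecialLinearGroup.coe_mul, Matrix.mul_apply, Fin.sum_univ_two]

lemma gmat_inv (c : ℤ) : (gmat c)⁻¹ = gmat (-c) := by
  apply inv_eq_of_mul_eq_one_right
  rw [gmat_mul]
  ext i j
  fin_cases i <;> fin_cases j <;> simp [gmat]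

/-- entry computation for products -/
lemma entry10 (A B C : SL2Z) :
    ((A * B * C : SL2Z) : Matrix (Fin 2) (Fin 2) ℤ) 1 0 =
      A 1 0 * (B 0 0 * C 0 0 + B 0 1 * C 1 0) + A 1 1 * (B 1 0 * C 0 0 + B 1 1 * C 1 0) := by
  simp [Matrix.SpecialLinearGroup.coe_mul, Matrix.mul_apply, Fin.sum_univ_two]
  ring

/-- The bottom left entry mod `M` is a double coset invariant for `Γ₁(M)`. -/
lemma doset_bl {M : ℕ} {γ₁ γ₂ : SL2Z} (h₁ : γ₁ ∈ Gamma1 M) (h₂ : γ₂ ∈ Gamma1 M) (g : SL2Z) :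
    ((((γ₁ * g * γ₂ : SL2Z) : Matrix (Fin 2) (Fin 2) ℤ) 1 0 : ℤ) : ZMod M) =
      ((g 1 0 : ℤ) : ZMod M) := by
  rw [Gamma1_mem] at h₁ h₂
  rw [entry10]
  push_cast
  rw [h₁.2.2, h₁.2.1, h₂.1, h₂.2.2]
  ring

lemma mem_Gamma_of_conj {M : ℕ} {c : ℤ} (hc : IsCoprime c (M : ℤ)) {a : SL2Z}
    (ha : a ∈ Gamma1 M) (ha2 : gmat (-c) * a * gmat c ∈ Gamma1 M) : a ∈ Gamma M := by
  have e : ((gmat (-c) * a * gmat c : SL2Z) : Matrix (Fin 2) (Fin 2) ℤ) 0 0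
      = a 0 0 + a 0 1 * c := by
    rw [Matrix.SpecialLinearGroup.coe_mul, Matrix.SpecialLinearGroup.coe_mul]
    simp [gmat, Matrix.SpecialLinearGroup.coe_mul, Matrix.mul_apply, Fin.sum_univ_two,
      Matrix.vecMul, Matrix.vecHead, Matrix.vecTail, dotProduct]
  rw [Gamma1_mem] at ha ha2
  have h1 : ((a 0 0 + a 0 1 * c : ℤ) : ZMod M) = 1 := by rw [← e]; exact ha2.1
  have h2 : ((a 0 1 * c : ℤ) : ZMod M) = 0 := by
    push_cast at h1 ⊢
    rw [ha.1] at h1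
    linear_combination h1
  rw [ZMod.intCast_zmod_eq_zero_iff_dvd] at h2
  have h3 : ((M : ℤ)) ∣ a 0 1 := hc.symm.dvd_of_dvd_mul_right h2
  rw [Gamma_mem]
  exact ⟨ha.1, by rwa [← ZMod.intCast_zmod_eq_zero_iff_dvd] at h3, ha.2.2, ha.2.1⟩

section LevelM

variable {V : Type} [AddCommGroup V] [Module ℂ V] (ρ : Representation ℂ SL2Z V)
variable (M : ℕ)

/-- evaluation functional at a coset -/
noncomputable def del (q : SL2Z ⧸ Gamma1 M) : Module.Dual ℂ ((SL2Z ⧸ Gamma1 M) →₀ ℂ) :=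
  Finsupp.lapply q

lemma dual_del (g : SL2Z) (q : SL2Z ⧸ Gamma1 M) :
    (permRep SL2Z (SL2Z ⧸ Gamma1 M)).dual g (del M q) = del M (g • q) := by
  ext f
  simp [del, Representation.dual_apply, Module.Dual.transpose_apply,
    permRep_apply]

/-- the building block of the invariant vectors -/
noncomputable def FF (c : ℤ) (v : V) (a : SL2Z) :
    TensorProduct ℂ (Module.Dual ℂ ((SL2Z ⧸ Gamma1 M) →₀ ℂ))
      (TensorProduct ℂ (Module.Dual ℂ ((SL2Z ⧸ Gamma1 M) →₀ ℂ)) V) :=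
  del M (QuotientGroup.mk a) ⊗ₜ[ℂ] (del M (QuotientGroup.mk (a * gmat c)) ⊗ₜ[ℂ] ρ a v)

lemma tau_FF (c : ℤ) (v : V) (g a : SL2Z) :
    (bigRep (Gamma1 M) ρ).ρ g (FF ρ M c v a) = FF ρ M c v (g * a) := by
  show (permRep SL2Z (SL2Z ⧸ Gamma1 M)).dual g (del M (QuotientGroup.mk a))
      ⊗ₜ[ℂ] ((permRep SL2Z (SL2Z ⧸ Gamma1 M)).dual g
        (del M (QuotientGroup.mk (a * gmat c))) ⊗ₜ[ℂ] ρ g (ρ a v)) = _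
  have e0 : ρ g (ρ a v) = ρ (g * a) v := by rw [map_mul]; rfl
  rw [dual_del, dual_del, FF, e0]
  rw [MulAction.Quotient.smul_mk, MulAction.Quotient.smul_mk, smul_eq_mul, smul_eq_mul,
    mul_assoc]

lemma FF_right {N : ℕ} (hlevel : ∀ γ ∈ Gamma N, ρ γ = 1) (hNM : N ∣ M)
    (c : ℤ) (v : V) (a h : SL2Z) (hh : h ∈ Gamma M) :
    FF ρ M c v (a * h) = FF ρ M c v a := by
  have e1 : (QuotientGroup.mk (a * h) : SL2Z ⧸ Gamma1 M) = QuotientGroup.mk a :=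
    QuotientGroup.mk_mul_of_mem a (Gamma_le_Gamma1 M hh)
  have hconj : (gmat c)⁻¹ * h * gmat c ∈ Gamma M := by
    have := (Gamma_normal M).conj_mem h hh (gmat c)⁻¹
    rwa [inv_inv] at this
  have e2 : (QuotientGroup.mk (a * h * gmat c) : SL2Z ⧸ Gamma1 M)
      = QuotientGroup.mk (a * gmat c) := by
    have : a * h * gmat c = (a * gmat c) * ((gmat c)⁻¹ * h * gmat c) := by group
    rw [this]
    exact QuotientGroup.mk_mul_of_mem _ (Gamma_le_Gamma1 M hconj)
  have e3 : ρ (a * h) v = ρ a v := by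
    rw [map_mul, Module.End.mul_apply, hlevel h (Gamma_le_Gamma hNM hh)]
    rfl
  rw [FF, FF, e1, e2, e3]

variable [Fintype (SL2Z ⧸ Gamma M)]

/-- the invariant vector attached to the double coset of `gmat c` -/
noncomputable def xc (c : ℤ) (v : V) :
    TensorProduct ℂ (Module.Dual ℂ ((SL2Z ⧸ Gamma1 M) →₀ ℂ))
      (TensorProduct ℂ (Module.Dual ℂ ((SL2Z ⧸ Gamma1 M) →₀ ℂ)) V) :=
  ∑ q : SL2Z ⧸ Gamma M, FF ρ M c v q.out

lemma xc_invariant {N : ℕ} (hlevel : ∀ γ ∈ Gamma N, ρ γ = 1) (hNM : N ∣ M)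
    (c : ℤ) (v : V) (g : SL2Z) :
    (bigRep (Gamma1 M) ρ).ρ g (xc ρ M c v) = xc ρ M c v := by
  rw [xc, map_sum]
  have step : ∀ q : SL2Z ⧸ Gamma M,
      (bigRep (Gamma1 M) ρ).ρ g (FF ρ M c v q.out) = FF ρ M c v (g • q).out := by
    intro q
    rw [tau_FF]
    have h1 : (QuotientGroup.mk (g * q.out) : SL2Z ⧸ Gamma M)
        = QuotientGroup.mk (g • q).out := by
      have := MulAction.Quotient.mk_smul_out (Gamma M) g q
      rw [smul_eq_mul] at this
      rw [this, QuotientGroup.out_eq']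
    rw [QuotientGroup.eq] at h1
    have : (g • q).out = (g * q.out) * ((g * q.out)⁻¹ * (g • q).out) := by group
    rw [this, FF_right ρ M hlevel hNM c v _ _ h1]
  rw [Finset.sum_congr rfl (fun q _ => step q)]
  exact Fintype.sum_bijective (g • ·) (MulAction.bijective g)
    (fun q : SL2Z ⧸ Gamma M => FF ρ M c v (g • q).out)
    (fun q : SL2Z ⧸ Gamma M => FF ρ M c v q.out) (fun q => rfl)

open Classical in
lemma ev_FF (c c' : ℤ) (v : V) (a : SL2Z) :
    evP (Gamma1 M) (QuotientGroup.mk 1) (QuotientGroup.mk (gmat c')) (FF ρ M c v a) =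
      if (QuotientGroup.mk 1 : SL2Z ⧸ Gamma1 M) = QuotientGroup.mk a ∧
          (QuotientGroup.mk (gmat c') : SL2Z ⧸ Gamma1 M) = QuotientGroup.mk (a * gmat c)
        then ρ a v else 0 := by
  rw [FF, evP_tmul]
  simp only [del, Finsupp.lapply_apply, Finsupp.single_apply]
  split_ifs with h1 h2 h3 h4 h5 <;>
    simp_all [one_smul, zero_smul, smul_zero]

open Classical in
lemma ev_xc_ne (c c' : ℤ) (v : V) (hne : ((c : ZMod M)) ≠ ((c' : ZMod M))) :
    evP (Gamma1 M) (QuotientGroup.mk 1) (QuotientGroup.mk (gmat c')) (xc ρ M c v) = 0 := by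
  rw [xc, map_sum]
  refine Finset.sum_eq_zero (fun q _ => ?_)
  rw [ev_FF]
  rw [if_neg]
  rintro ⟨h1, h2⟩
  rw [QuotientGroup.eq] at h1 h2
  rw [inv_one, one_mul] at h1
  have hrep : gmat c' = q.out * gmat c * ((gmat c')⁻¹ * (q.out * gmat c))⁻¹ := by group
  have := doset_bl h1 (Subgroup.inv_mem _ h2) (gmat c)
  rw [← hrep] at this
  rw [gmat_10, gmat_10] at this
  exact hne this.symm

open Classical in
lemma ev_xc_self {N : ℕ} (hlevel : ∀ γ ∈ Gamma N, ρ γ = 1) (hNM : N ∣ M)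
    (hc : IsCoprime c ((M : ℕ) : ℤ)) (v : V) (hv : v ≠ 0) :
    ∃ n : ℕ, 0 < n ∧
      evP (Gamma1 M) (QuotientGroup.mk 1) (QuotientGroup.mk (gmat c)) (xc ρ M c v) = n • v := by
  classical
  rw [xc, map_sum]
  set P : (SL2Z ⧸ Gamma M) → Prop := fun q =>
    (QuotientGroup.mk 1 : SL2Z ⧸ Gamma1 M) = QuotientGroup.mk q.out ∧
      (QuotientGroup.mk (gmat c) : SL2Z ⧸ Gamma1 M) = QuotientGroup.mk (q.out * gmat c)
    with hP
  have step : ∀ q : SL2Z ⧸ Gamma M,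
      evP (Gamma1 M) (QuotientGroup.mk 1) (QuotientGroup.mk (gmat c)) (FF ρ M c v q.out) =
        if P q then v else 0 := by
    intro q
    rw [ev_FF]
    by_cases hq : P q
    · rw [if_pos hq, if_pos hq]
      obtain ⟨h1, h2⟩ := hq
      rw [QuotientGroup.eq, inv_one, one_mul] at h1
      rw [QuotientGroup.eq] at h2
      rw [gmat_inv] at h2
      rw [← mul_assoc] at h2
      have hmem : q.out ∈ Gamma M := mem_Gamma_of_conj hc h1 h2
      rw [hlevel q.out (Gamma_le_Gamma hNM hmem)]
      rfl
    · rw [if_neg hq, if_neg hq]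
  rw [Finset.sum_congr rfl (fun q _ => step q)]
  classical
  rw [← Finset.sum_filter, Finset.sum_const]
  refine ⟨(Finset.univ.filter P).card, ?_, rfl⟩
  rw [Finset.card_pos]
  refine ⟨QuotientGroup.mk 1, Finset.mem_filter.mpr ⟨Finset.mem_univ _, ?_, ?_⟩⟩
  · have h0 : (QuotientGroup.mk (QuotientGroup.mk (s := Gamma M) 1).out : SL2Z ⧸ Gamma M)
        = QuotientGroup.mk 1 := QuotientGroup.out_eq' _
    rw [QuotientGroup.eq, mul_one] at h0
    rw [QuotientGroup.eq, inv_one, one_mul]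
    exact Gamma_le_Gamma1 M ((Gamma M).inv_mem_iff.mp h0)
  · have h0 : (QuotientGroup.mk (QuotientGroup.mk (s := Gamma M) 1).out : SL2Z ⧸ Gamma M)
        = QuotientGroup.mk 1 := QuotientGroup.out_eq' _
    rw [QuotientGroup.eq, mul_one] at h0
    have hmem : (QuotientGroup.mk (s := Gamma M) 1).out ∈ Gamma M :=
      (Gamma M).inv_mem_iff.mp h0
    rw [QuotientGroup.eq]
    have hconj : (gmat c)⁻¹ * (QuotientGroup.mk (s := Gamma M) 1).out * gmat c ∈ Gamma M := by
      have := (Gamma_normal M).conj_mem _ hmem (gmat c)⁻¹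
      rwa [inv_inv] at this
    have : (gmat c)⁻¹ * ((QuotientGroup.mk (s := Gamma M) 1).out * gmat c)
        = (gmat c)⁻¹ * (QuotientGroup.mk (s := Gamma M) 1).out * gmat c := by group
    rw [this]
    exact Gamma_le_Gamma1 M hconj

end LevelM

section Transport

variable {V : Type} [AddCommGroup V] [Module ℂ V] (ρ : Representation ℂ SL2Z V) (M : ℕ)

/-- natural projection of coset spaces -/
def piQ : (SL2Z ⧸ Gamma1 0) → (SL2Z ⧸ Gamma1 M) :=
  Quotient.map' id (fun a b hab => by
    rw [QuotientGroup.leftRel_apply] at hab ⊢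
    exact Gamma1_le_Gamma1' (dvd_zero M) hab)

lemma piQ_mk (a : SL2Z) : piQ M (QuotientGroup.mk a) = QuotientGroup.mk a := rfl

lemma piQ_smul (g : SL2Z) (q : SL2Z ⧸ Gamma1 0) : piQ M (g • q) = g • piQ M q := by
  induction q using QuotientGroup.induction_on with | H a =>
  rw [MulAction.Quotient.smul_mk, piQ_mk, piQ_mk, MulAction.Quotient.smul_mk]

/-- pushforward on group algebras -/
noncomputable def lmap : ((SL2Z ⧸ Gamma1 0) →₀ ℂ) →ₗ[ℂ] ((SL2Z ⧸ Gamma1 M) →₀ ℂ) :=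
  Finsupp.lmapDomain ℂ ℂ (piQ M)

lemma lmap_equivariant (g : SL2Z) (f : (SL2Z ⧸ Gamma1 0) →₀ ℂ) :
    lmap M ((permRep SL2Z (SL2Z ⧸ Gamma1 0)) g f)
      = (permRep SL2Z (SL2Z ⧸ Gamma1 M)) g (lmap M f) := by
  induction f using Finsupp.induction_linear with
  | zero => simp
  | add a b ha hb => simp [map_add, ha, hb]
  | single q r =>
    simp only [lmap, permRep_single, Finsupp.lmapDomain_apply,
      Finsupp.mapDomain_single, piQ_smul]

/-- transport of tensors from level `M` to level `0` -/
noncomputable def Psi :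
    (TensorProduct ℂ (Module.Dual ℂ ((SL2Z ⧸ Gamma1 M) →₀ ℂ))
      (TensorProduct ℂ (Module.Dual ℂ ((SL2Z ⧸ Gamma1 M) →₀ ℂ)) V)) →ₗ[ℂ]
    (TensorProduct ℂ (Module.Dual ℂ ((SL2Z ⧸ Gamma1 0) →₀ ℂ))
      (TensorProduct ℂ (Module.Dual ℂ ((SL2Z ⧸ Gamma1 0) →₀ ℂ)) V)) :=
  TensorProduct.map ((lmap M).dualMap)
    (TensorProduct.map ((lmap M).dualMap) (LinearMap.id (R := ℂ) (M := V)))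

lemma dualMap_equivariant (g : SL2Z) (φ : Module.Dual ℂ ((SL2Z ⧸ Gamma1 M) →₀ ℂ)) :
    (permRep SL2Z (SL2Z ⧸ Gamma1 0)).dual g ((lmap M).dualMap φ)
      = (lmap M).dualMap ((permRep SL2Z (SL2Z ⧸ Gamma1 M)).dual g φ) := by
  ext f
  simp only [Representation.dual_apply, Module.Dual.transpose_apply, LinearMap.comp_apply,
    LinearMap.dualMap_apply, lmap_equivariant]

lemma Psi_equivariant (g : SL2Z)
    (w : TensorProduct ℂ (Module.Dual ℂ ((SL2Z ⧸ Gamma1 M) →₀ ℂ))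
      (TensorProduct ℂ (Module.Dual ℂ ((SL2Z ⧸ Gamma1 M) →₀ ℂ)) V)) :
    (bigRep (Gamma1 0) ρ).ρ g (Psi (V := V) M w) = Psi (V := V) M ((bigRep (Gamma1 M) ρ).ρ g w) := by
  induction w using TensorProduct.induction_on with
  | zero => simp
  | add x y hx hy => simp only [map_add, hx, hy]
  | tmul φ z =>
    induction z using TensorProduct.induction_on with
    | zero => simp [TensorProduct.tmul_zero]
    | add x y hx hy => simp only [TensorProduct.tmul_add, map_add, hx, hy]
    | tmul ψ v =>
      show (permRep SL2Z (SL2Z ⧸ Gamma1 0)).dual g ((lmap M).dualMap φ)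
          ⊗ₜ[ℂ] ((permRep SL2Z (SL2Z ⧸ Gamma1 0)).dual g
            ((lmap M).dualMap ψ) ⊗ₜ[ℂ] ρ g v) = _
      rw [dualMap_equivariant, dualMap_equivariant]
      rfl

lemma evP_Psi (q₁ q₂ : SL2Z ⧸ Gamma1 0)
    (w : TensorProduct ℂ (Module.Dual ℂ ((SL2Z ⧸ Gamma1 M) →₀ ℂ))
      (TensorProduct ℂ (Module.Dual ℂ ((SL2Z ⧸ Gamma1 M) →₀ ℂ)) V)) :
    evP (Gamma1 0) q₁ q₂ (Psi (V := V) M w) = evP (Gamma1 M) (piQ M q₁) (piQ M q₂) w := by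
  induction w using TensorProduct.induction_on with
  | zero => simp
  | add x y hx hy => simp only [map_add, hx, hy]
  | tmul φ z =>
    induction z using TensorProduct.induction_on with
    | zero => simp [TensorProduct.tmul_zero]
    | add x y hx hy => simp only [TensorProduct.tmul_add, map_add, hx, hy]
    | tmul ψ v =>
      show evP (Gamma1 0) q₁ q₂ ((lmap M).dualMap φ ⊗ₜ[ℂ] ((lmap M).dualMap ψ ⊗ₜ[ℂ] v)) = _
      rw [evP_tmul, evP_tmul]
      rw [LinearMap.dualMap_apply, LinearMap.dualMap_apply]
      rw [lmap, Finsupp.lmapDomain_apply, Finsupp.lmapDomain_apply,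
        Finsupp.mapDomain_single, Finsupp.mapDomain_single]

end Transport

lemma subsingleton_tensor {X V : Type} [AddCommGroup X] [Module ℂ X] [AddCommGroup V]
    [Module ℂ V] [Subsingleton V] : Subsingleton (TensorProduct ℂ X V) := by
  have hz : ∀ z : TensorProduct ℂ X V, z = 0 := by
    intro z
    induction z using TensorProduct.induction_on with
    | zero => rfl
    | add x y hx hy => rw [hx, hy, add_zero]
    | tmul x v => rw [Subsingleton.elim v 0, TensorProduct.tmul_zero]
  exact ⟨fun a b => by rw [hz a, hz b]⟩

lemma infinite_doset : Infinite (DoubleCoset.Quotient (↑(Gamma1 0) : Set SL2Z) (↑(Gamma1 0) : Set SL2Z)) := by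
  apply Infinite.of_injective (fun c : ℤ => DoubleCoset.mk (Gamma1 0) (Gamma1 0) (gmat c))
  intro c c' h
  rw [DoubleCoset.eq] at h
  obtain ⟨h₁, hh₁, h₂, hh₂, he⟩ := h
  have := doset_bl (M := 0) hh₁ hh₂ (gmat c)
  rw [← he, gmat_10, gmat_10] at this
  have h2 := (ZMod.intCast_eq_intCast_iff _ _ 0).mp this
  simpa [Int.ModEq] using h2.symm

lemma levelzero_not_finite {N : ℕ} (hN : 0 < N) {V : Type} [AddCommGroup V] [Module ℂ V]
    [Nontrivial V] (ρ : Representation ℂ SL2Z V)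
    (hlevel : ∀ γ ∈ Gamma N, ρ γ = 1) :
    ¬ Module.Finite ℂ ((bigRep (Gamma1 0) ρ).ρ.invariants) := by
  intro hfin
  obtain ⟨v, hv⟩ := exists_ne (0 : V)
  set k := Module.finrank ℂ ((bigRep (Gamma1 0) ρ).ρ.invariants) + 1 with hk
  obtain ⟨p, hpk, hp⟩ := Nat.exists_infinite_primes (k * N + 2)
  set M := N * p with hM
  have hNM : N ∣ M := Dvd.intro p rfl
  haveI : NeZero M := ⟨(Nat.mul_pos hN hp.pos).ne'⟩
  haveI : Finite (SL2Z ⧸ Gamma M) := finite_quotient_gamma M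
  haveI : Fintype (SL2Z ⧸ Gamma M) := Fintype.ofFinite _
  set cc : Fin k → ℤ := fun j => 1 + (j : ℕ) * N with hcc
  have hccp : ∀ j : Fin k, (0:ℤ) < cc j ∧ cc j < p := by
    intro j
    have h1 : ((j : ℕ) : ℤ) < (k : ℤ) := by exact_mod_cast j.isLt
    have h2 : ((k : ℤ)) * N + 2 ≤ (p : ℤ) := by exact_mod_cast hpk
    have h3 : (0:ℤ) < N := by exact_mod_cast hN
    have h4 : (0:ℤ) ≤ ((j : ℕ) : ℤ) := by positivity
    constructor
    · simp only [hcc]; positivity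
    · simp only [hcc]; nlinarith
  have hcop : ∀ j : Fin k, IsCoprime (cc j) ((M : ℕ) : ℤ) := by
    intro j
    have hpZ : Prime ((p : ℕ) : ℤ) := Nat.prime_iff_prime_int.mp hp
    have hpc : IsCoprime (cc j) ((p : ℕ) : ℤ) := by
      refine (hpZ.irreducible.coprime_iff_not_dvd.mpr ?_).symm
      intro hdvd
      have := Int.le_of_dvd (hccp j).1 hdvd
      linarith [(hccp j).2]
    have hNc : IsCoprime (cc j) ((N : ℕ) : ℤ) := ⟨1, -((j : ℕ) : ℤ), by simp only [hcc]; ring⟩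
    have he : ((M : ℕ) : ℤ) = ((N : ℕ) : ℤ) * ((p : ℕ) : ℤ) := by rw [hM]; push_cast; ring
    rw [he]
    exact hNc.mul_right hpc
  have hdist : ∀ i j : Fin k, ((cc i : ZMod M) = (cc j : ZMod M)) → i = j := by
    intro i j hij
    rw [ZMod.intCast_eq_intCast_iff] at hij
    have hd := hij.dvd
    have he : cc j - cc i = (((j : ℕ) : ℤ) - ((i : ℕ) : ℤ)) * N := by simp [hcc]; ring
    have h1 : ((i : ℕ) : ℤ) < (k : ℤ) := by exact_mod_cast i.isLt
    have h2 : ((j : ℕ) : ℤ) < (k : ℤ) := by exact_mod_cast j.isLt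
    have h3 : (0:ℤ) < N := by exact_mod_cast hN
    have h4 : (0:ℤ) ≤ ((j : ℕ) : ℤ) := by positivity
    have h5 : (0:ℤ) ≤ ((i : ℕ) : ℤ) := by positivity
    have h6 : ((k : ℤ)) * N + 2 ≤ (p : ℤ) := by exact_mod_cast hpk
    have habs : |(((j : ℕ) : ℤ) - ((i : ℕ) : ℤ)) * N| < ((M : ℕ) : ℤ) := by
      rw [abs_mul, abs_of_nonneg h3.le]
      have : |((j : ℕ) : ℤ) - ((i : ℕ) : ℤ)| < (k : ℤ) := abs_lt.mpr ⟨by linarith, by linarith⟩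
      have hM' : ((M : ℕ) : ℤ) = (N : ℤ) * (p : ℤ) := by rw [hM]; push_cast; ring
      rw [hM']
      nlinarith
    have hz := Int.eq_zero_of_abs_lt_dvd (he ▸ hd) habs
    have : ((j : ℕ) : ℤ) = ((i : ℕ) : ℤ) := by
      rcases mul_eq_zero.mp hz with h | h
      · linarith
      · exact absurd h h3.ne'
    exact (Fin.ext (by exact_mod_cast this)).symm
  -- the linearly independent family
  set y : Fin k → _ := fun j => Psi (V := V) M (xc ρ M (cc j) v) with hy
  have hyinv : ∀ j, ∀ g : SL2Z, (bigRep (Gamma1 0) ρ).ρ g (y j) = y j := by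
    intro j g
    rw [hy, Psi_equivariant, xc_invariant ρ M hlevel hNM]
  set z : Fin k → ((bigRep (Gamma1 0) ρ).ρ.invariants) := fun j => ⟨y j, fun g => hyinv j g⟩
    with hz
  have hzli : LinearIndependent ℂ z := by
    rw [Fintype.linearIndependent_iff]
    intro t ht i
    have hval : (∑ j, t j • y j) = 0 := by
      have h7 := congrArg (((bigRep (Gamma1 0) ρ).ρ.invariants).subtype) ht
      rw [map_sum, map_zero] at h7
      simpa only [map_smul, Submodule.coe_subtype, hz] using h7
    obtain ⟨n, hn, hev⟩ := ev_xc_self ρ M hlevel hNM (hcop i) v hv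
    have hterm : ∀ j, evP (Gamma1 0) (QuotientGroup.mk 1) (QuotientGroup.mk (gmat (cc i)))
        (y j) = if j = i then (n : ℕ) • v else 0 := by
      intro j
      rw [hy, evP_Psi, piQ_mk, piQ_mk]
      by_cases hji : j = i
      · rw [if_pos hji, hji, hev]
      · rw [if_neg hji]
        exact ev_xc_ne ρ M (cc j) (cc i) v (fun hcast => hji (hdist j i hcast))
    have happ := congrArg (evP (Gamma1 0) (QuotientGroup.mk 1)
      (QuotientGroup.mk (gmat (cc i)))) hval
    rw [map_sum, map_zero] at happ
    simp only [map_smul, hterm] at happ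
    classical
    rw [Finset.sum_eq_single i (fun b _ hbi => by rw [if_neg hbi, smul_zero])
      (fun h => absurd (Finset.mem_univ i) h)] at happ
    rw [if_pos rfl, ← Nat.cast_smul_eq_nsmul ℂ, smul_smul, smul_eq_zero] at happ
    rcases happ with h | h
    · rcases mul_eq_zero.mp h with h' | h'
      · exact h'
      · exact absurd h' (Nat.cast_ne_zero.mpr hn.ne')
    · exact absurd h hv
  have hcard := hzli.fintype_card_le_finrank
  rw [Fintype.card_fin] at hcard
  omega

/-- For a finite-dimensional representation `ρ` of `SL₂(ℤ)` of level `N`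
(i.e. whose kernel contains `Γ(N)`) and a multiple `N₀` of `N`, we have
`dim H⁰(ρ_{N₀}^∨ ⊗ ρ_{N₀}^∨ ⊗ ρ) ≤ #(Γ₁(N₀)\SL₂(ℤ)/Γ₁(N₀)) · dim ρ`. -/
theorem triple_product_dim_bound (N N₀ : ℕ) (hN : 0 < N) (hdvd : N ∣ N₀)
    {V : Type} [AddCommGroup V] [Module ℂ V] [FiniteDimensional ℂ V]
    (ρ : Representation ℂ SL2Z V)
    (hlevel : ∀ γ ∈ Gamma N, ρ γ = 1) :
    Module.finrank ℂ
      ((Rep.of (rhoInd N₀).dual ⊗ (Rep.of (rhoInd N₀).dual ⊗ Rep.of ρ) :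
          Rep ℂ SL2Z).ρ.invariants) ≤
      Nat.card (DoubleCoset.Quotient (↑(Gamma1 N₀) : Set SL2Z) (↑(Gamma1 N₀) : Set SL2Z)) *
        Module.finrank ℂ V := by
  rcases Nat.eq_zero_or_pos N₀ with h0 | hpos
  · subst h0
    haveI := infinite_doset
    rw [Nat.card_eq_zero_of_infinite, zero_mul, Nat.le_zero]
    rcases subsingleton_or_nontrivial V with hV | hV
    · haveI : Subsingleton
          (TensorProduct ℂ (Module.Dual ℂ ((SL2Z ⧸ Gamma1 0) →₀ ℂ)) V) :=
        subsingleton_tensor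
      haveI : Subsingleton
          (TensorProduct ℂ (Module.Dual ℂ ((SL2Z ⧸ Gamma1 0) →₀ ℂ))
            (TensorProduct ℂ (Module.Dual ℂ ((SL2Z ⧸ Gamma1 0) →₀ ℂ)) V)) :=
        subsingleton_tensor
      haveI : Subsingleton
          ((Rep.of (rhoInd 0).dual ⊗ (Rep.of (rhoInd 0).dual ⊗ Rep.of ρ) :
            Rep ℂ SL2Z).ρ.invariants) :=
        ⟨fun a b => Subtype.ext (Subsingleton.elim
          (α := TensorProduct ℂ (Module.Dual ℂ ((SL2Z ⧸ Gamma1 0) →₀ ℂ))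
            (TensorProduct ℂ (Module.Dual ℂ ((SL2Z ⧸ Gamma1 0) →₀ ℂ)) V)) a.1 b.1)⟩
      exact Module.finrank_zero_of_subsingleton
    · haveI : Module.Free ℂ
          ((Rep.of (rhoInd 0).dual ⊗ (Rep.of (rhoInd 0).dual ⊗ Rep.of ρ) :
            Rep ℂ SL2Z).ρ.invariants) :=
        Module.Free.of_divisionRing ℂ _
      exact Module.finrank_of_not_finite (levelzero_not_finite hN ρ hlevel)
  · haveI : NeZero N₀ := ⟨hpos.ne'⟩
    haveI : Finite (SL2Z ⧸ Gamma1 N₀) :=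
      finite_quotient_of_gamma_le N₀ _ (Gamma_le_Gamma1 N₀)
    exact main_fin (Gamma1 N₀) ρ
end

section
/- Let G be a group, K, H subgroups with H of finite index, and ρ a finite-dimensional complex representation of H. Then Res_K^G Ind_H^G ρ ≅ ⊕_{g ∈ H\G/K} Ind_{K ∩ g⁻¹Hg}^K ρ^g, where ρ^g(x) = ρ(gxg⁻¹) for x ∈ K ∩ g⁻¹Hg (Mackey's double coset theorem). -/
/-- The space of `G`-equivariant linear maps between (the spaces of) two
representations, as a submodule of all linear maps. -/
def equivariantHoms {G V W : Type*} [Group G] [AddCommGroup V] [Module ℂ V]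
    [AddCommGroup W] [Module ℂ W]
    (ρ : Representation ℂ G V) (σ : Representation ℂ G W) : Submodule ℂ (V →ₗ[ℂ] W) where
  carrier := {T | ∀ g : G, T ∘ₗ ρ g = σ g ∘ₗ T}
  add_mem' := by
    intro a b ha hb g
    simp only [LinearMap.add_comp, LinearMap.comp_add, ha g, hb g]
  zero_mem' := by
    intro g
    simp
  smul_mem' := by
    intro c a ha g
    simp only [LinearMap.smul_comp, LinearMap.comp_smul, ha g]

/-- The carrier of the representation of `G` induced from a representation `ρ` of a
subgroup `H ≤ G`, realized as the space of functions `f : G → V` with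
`f (g·h) = ρ(h)⁻¹ (f g)`.  (For finite-index `H` this realizes `ℂ[G] ⊗_{ℂ[H]} ρ`.) -/
def indCarrier {G : Type*} [Group G] (H : Subgroup G) {V : Type*} [AddCommGroup V]
    [Module ℂ V] (ρ : Representation ℂ H V) : Submodule ℂ (G → V) where
  carrier := {f | ∀ (g : G) (h : H), f (g * h) = ρ h⁻¹ (f g)}
  add_mem' := by
    intro a b ha hb g h
    simp [ha g h, hb g h]
  zero_mem' := by
    intro g h
    simp
  smul_mem' := by
    intro c a ha g h
    simp [ha g h]

/-- The induced representation `Ind_H^G ρ`, acting on `indCarrier H ρ` by left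
translation. -/
noncomputable def indRep {G : Type*} [Group G] (H : Subgroup G) {V : Type*} [AddCommGroup V]
    [Module ℂ V] (ρ : Representation ℂ H V) : Representation ℂ G (indCarrier H ρ) where
  toFun g :=
    { toFun := fun f => ⟨fun x => f.1 (g⁻¹ * x), by
        intro x h
        simpa [mul_assoc] using f.2 (g⁻¹ * x) h⟩
      map_add' := fun f₁ f₂ => rfl
      map_smul' := fun c f => rfl }
  map_one' := by
    ext f x
    simp
  map_mul' := by
    intro g₁ g₂
    ext f x
    simp [mul_assoc]

open DirectSum

/-- The isomorphism `K ∩ g⁻¹Hg → H`, `x ↦ g·x·g⁻¹`, along which the conjugate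
representation `ρ^g` is defined. -/
def conjHom {G : Type*} [Group G] (H K : Subgroup G) (g : G) :
    ↥((Subgroup.map (MulAut.conj g⁻¹).toMonoidHom H).subgroupOf K) →* ↥H where
  toFun x := ⟨g * ((x : ↥K) : G) * g⁻¹, by
    have hx := x.2
    rw [Subgroup.mem_subgroupOf] at hx
    obtain ⟨h, hh, hxx⟩ := Subgroup.mem_map.mp hx
    rw [← hxx]
    simpa [MulAut.conj_apply, mul_assoc] using hh⟩
  map_one' := by
    ext
    simp
  map_mul' := by
    intro a b
    ext
    simp [mul_assoc]
    exact mul_assoc ((a : ↥K) : G) ((b : ↥K) : G) g⁻¹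

section Aux

variable {G : Type*} [Group G] (H K : Subgroup G) {V : Type*} [AddCommGroup V]
    [Module ℂ V] (ρ : Representation ℂ ↥H V)

/-- membership in the conjugate subgroup -/
lemma mem_conjSubgroup_iff (g : G) (x : ↥K) :
    x ∈ (Subgroup.map (MulAut.conj g⁻¹).toMonoidHom H).subgroupOf K ↔ g * ↑x * g⁻¹ ∈ H := by
  rw [Subgroup.mem_subgroupOf, Subgroup.mem_map]
  constructor
  · rintro ⟨h, hh, hxx⟩
    have : g * (↑x : G) * g⁻¹ = h := by
      rw [← hxx]; simp [MulAut.conj_apply, mul_assoc]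
    rw [this]; exact hh
  · intro hh
    exact ⟨g * ↑x * g⁻¹, hh, by simp [MulAut.conj_apply]; group⟩

/-- The restriction map to a component. -/
def resMap (g : G) (f : ↥(indCarrier H ρ)) :
    ↥(indCarrier ((Subgroup.map (MulAut.conj g⁻¹).toMonoidHom H).subgroupOf K)
      (ρ.comp (conjHom H K g))) :=
  ⟨fun k => f.1 (↑k * g⁻¹), by
    intro k x
    show f.1 (((↑(k * ↑x) : ↥K) : G) * g⁻¹) = _
    have h1 : ((↑(k * ↑x) : ↥K) : G) * g⁻¹ = (↑k * g⁻¹) * ↑(conjHom H K g x) := by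
      show ((↑k * ↑↑x : G)) * g⁻¹ = (↑k * g⁻¹) * (g * ↑↑x * g⁻¹)
      group
    rw [h1, f.2 (↑k * g⁻¹) (conjHom H K g x)]
    show _ = ρ ((conjHom H K g) x⁻¹) _
    rw [map_inv (conjHom H K g) x]⟩

lemma resMap_wd (g : G)
    (c : ↥(indCarrier ((Subgroup.map (MulAut.conj g⁻¹).toMonoidHom H).subgroupOf K)
      (ρ.comp (conjHom H K g)))) {k k' : ↥K} {h h' : ↥H}
    (heq : (↑k : G) * g⁻¹ * ↑h = ↑k' * g⁻¹ * ↑h') :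
    ρ h⁻¹ (c.1 k) = ρ h'⁻¹ (c.1 k') := by
  have hx : ((↑(k⁻¹ * k') : ↥K) : G) = g⁻¹ * (↑h * (↑h')⁻¹) * g := by
    push_cast
    have : (↑k' : G) = ↑k * g⁻¹ * ↑h * (↑h')⁻¹ * g := by
      rw [heq]; group
    rw [this]; group
  have hmem : (k⁻¹ * k') ∈ (Subgroup.map (MulAut.conj g⁻¹).toMonoidHom H).subgroupOf K := by
    rw [mem_conjSubgroup_iff, hx]
    have : g * (g⁻¹ * ((↑h : G) * (↑h')⁻¹) * g) * g⁻¹ = ↑(h * h'⁻¹) := by push_cast; group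
    rw [this]; exact (h * h'⁻¹).2
  set ξ : ↥((Subgroup.map (MulAut.conj g⁻¹).toMonoidHom H).subgroupOf K) := ⟨k⁻¹ * k', hmem⟩
    with hξ
  have hck : c.1 k' = ρ (h' * h⁻¹) (c.1 k) := by
    have h2 := c.2 k ξ
    have hk : k * (↑ξ : ↥K) = k' := by rw [hξ]; group
    rw [hk] at h2
    rw [h2]
    have h3 : (conjHom H K g) ξ⁻¹ = h' * h⁻¹ := by
      ext
      show g * ((↑(ξ⁻¹ : _) : ↥K) : G) * g⁻¹ = ↑h' * (↑h)⁻¹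
      have h4 : ((↑(ξ⁻¹ : _) : ↥K) : G) = (↑k')⁻¹ * ↑k := by
        rw [hξ]; push_cast; group
      rw [h4]
      have hx' : ((↑k')⁻¹ : G) * ↑k = g⁻¹ * (↑h' * (↑h)⁻¹) * g := by
        have h5 : (↑k : G) = ↑k' * g⁻¹ * ↑h' * (↑h)⁻¹ * g := by rw [← heq]; group
        rw [h5]; group
      rw [hx']; group
    show ρ ((conjHom H K g) ξ⁻¹) (c.1 k) = _
    rw [h3]
  rw [hck, ← Module.End.mul_apply, ← map_mul]
  congr 1
  group


lemma doset_decomp (x : G) :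
    ∃ (k : ↥K) (h : ↥H),
      x = ↑k * (DoubleCoset.mk ↑H ↑K x⁻¹ : DoubleCoset.Quotient (↑H : Set G) ↑K).out⁻¹ * ↑h := by
  obtain ⟨h, k, hh, hk, hout⟩ := DoubleCoset.mk_out_eq_mul H K x⁻¹
  refine ⟨⟨k, hk⟩, ⟨h, hh⟩, ?_⟩
  show x = k * _⁻¹ * h
  rw [hout]
  group

variable {H K ρ} in
/-- Reconstruct an element of the induced representation from its components. -/
noncomputable def recompose
    (c : ∀ q : DoubleCoset.Quotient (↑H : Set G) (↑K : Set G),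
      ↥(indCarrier ((Subgroup.map (MulAut.conj (Quotient.out q)⁻¹).toMonoidHom
          H).subgroupOf K) (ρ.comp (conjHom H K (Quotient.out q))))) : G → V :=
  fun x => ρ ((doset_decomp H K x).choose_spec.choose)⁻¹
    ((c (DoubleCoset.mk ↑H ↑K x⁻¹)).1 (doset_decomp H K x).choose)

variable {H K ρ} in
lemma recompose_spec
    (c : ∀ q : DoubleCoset.Quotient (↑H : Set G) (↑K : Set G),
      ↥(indCarrier ((Subgroup.map (MulAut.conj (Quotient.out q)⁻¹).toMonoidHom
          H).subgroupOf K) (ρ.comp (conjHom H K (Quotient.out q)))))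
    (x : G) {q : DoubleCoset.Quotient (↑H : Set G) (↑K : Set G)}
    (hq : DoubleCoset.mk ↑H ↑K x⁻¹ = q) (k : ↥K) (h : ↥H)
    (hx : x = ↑k * (Quotient.out q)⁻¹ * ↑h) :
    recompose c x = ρ h⁻¹ ((c q).1 k) := by
  subst hq
  have h2 := (doset_decomp H K x).choose_spec.choose_spec
  rw [recompose]
  exact resMap_wd H K ρ _ (c _) (by rw [← h2, ← hx])

end Aux

instance dosetQuotientFinite {G : Type*} [Group G] (H K : Subgroup G) [H.FiniteIndex] :
    Finite (DoubleCoset.Quotient (↑H : Set G) (↑K : Set G)) := by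
  have : Finite (Quotient (QuotientGroup.rightRel H)) :=
    Finite.of_equiv _ (QuotientGroup.quotientRightRelEquivQuotientLeftRel H).symm
  apply Finite.of_surjective
    (fun x : Quotient (QuotientGroup.rightRel H) =>
      Quotient.liftOn' x (DoubleCoset.mk ↑H ↑K)
        (fun a b hab => (DoubleCoset.eq H K a b).2
          ⟨b * a⁻¹, (QuotientGroup.rightRel_apply).1 hab, 1, one_mem K, by group⟩))
  intro q
  exact ⟨Quotient.mk'' q.out, DoubleCoset.out_eq' H K q⟩


section Main

variable {G : Type*} [Group G] (H K : Subgroup G) {V : Type*} [AddCommGroup V]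
    [Module ℂ V] (ρ : Representation ℂ ↥H V)

/-- The restriction to all components, as a linear map. -/
noncomputable def resLinear : ↥(indCarrier H ρ) →ₗ[ℂ]
    ∀ q : DoubleCoset.Quotient (↑H : Set G) (↑K : Set G),
      ↥(indCarrier ((Subgroup.map (MulAut.conj (Quotient.out q)⁻¹).toMonoidHom
          H).subgroupOf K) (ρ.comp (conjHom H K (Quotient.out q)))) where
  toFun f q := resMap H K ρ (Quotient.out q) f
  map_add' f g := rfl
  map_smul' c f := rfl

lemma resLinear_injective : Function.Injective (resLinear H K ρ) := by
  intro f₁ f₂ hf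
  ext x
  obtain ⟨k, h, hx⟩ := doset_decomp H K x
  set q := (DoubleCoset.mk ↑H ↑K x⁻¹ : DoubleCoset.Quotient (↑H : Set G) ↑K)
  have e1 : f₁.1 x = ρ h⁻¹ ((resLinear H K ρ f₁ q).1 k) := by
    rw [hx]; exact f₁.2 _ h
  have e2 : f₂.1 x = ρ h⁻¹ ((resLinear H K ρ f₂ q).1 k) := by
    rw [hx]; exact f₂.2 _ h
  show f₁.1 x = f₂.1 x
  rw [e1, e2, hf]

lemma resLinear_surjective : Function.Surjective (resLinear H K ρ) := by
  intro c
  have hmem : recompose c ∈ indCarrier H ρ := by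
    intro x h₀
    obtain ⟨k, h, hx⟩ := doset_decomp H K x
    have hq' : (DoubleCoset.mk ↑H ↑K (x * ↑h₀)⁻¹ : DoubleCoset.Quotient (↑H : Set G) ↑K)
        = DoubleCoset.mk ↑H ↑K x⁻¹ :=
      (DoubleCoset.eq H K _ _).2 ⟨↑h₀, h₀.2, 1, one_mem K, by group⟩
    have key : ∀ g : G, x = ↑k * g⁻¹ * ↑h → x * ↑h₀ = ↑k * g⁻¹ * ↑(h * h₀) := by
      intro g hg
      rw [hg]
      push_cast
      group
    have e1 : recompose c (x * ↑h₀) = ρ (h * h₀)⁻¹ ((c _).1 k) :=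
      recompose_spec c (x * ↑h₀) hq' k (h * h₀) (key _ hx)
    have e2 : recompose c x = ρ h⁻¹ ((c _).1 k) :=
      recompose_spec c x rfl k h hx
    rw [e1, e2, mul_inv_rev, map_mul, Module.End.mul_apply]
  refine ⟨⟨recompose c, hmem⟩, ?_⟩
  funext q
  apply Subtype.ext
  funext k
  show recompose c (↑k * (Quotient.out q)⁻¹) = (c q).1 k
  have hq : (DoubleCoset.mk ↑H ↑K ((↑k : G) * (Quotient.out q)⁻¹)⁻¹
      : DoubleCoset.Quotient (↑H : Set G) ↑K) = q := by
    have h1 : (DoubleCoset.mk ↑H ↑K ((↑k : G) * (Quotient.out q)⁻¹)⁻¹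
        : DoubleCoset.Quotient (↑H : Set G) ↑K) = DoubleCoset.mk ↑H ↑K (Quotient.out q) :=
      (DoubleCoset.eq H K _ _).2 ⟨1, one_mem H, ↑k, k.2, by group⟩
    rw [h1, DoubleCoset.out_eq' H K q]
  have := recompose_spec c (↑k * (Quotient.out q)⁻¹) hq k 1 (by push_cast; group)
  rw [this, inv_one, map_one]
  rfl

end Main

lemma resLinear_equivariant {G : Type*} [Group G] (H K : Subgroup G) {V : Type*}
    [AddCommGroup V] [Module ℂ V] (ρ : Representation ℂ ↥H V) (k : ↥K)
    (x : ↥(indCarrier H ρ)) (q : DoubleCoset.Quotient (↑H : Set G) (↑K : Set G)) :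
    resLinear H K ρ ((indRep H ρ) (↑k : G) x) q =
      (indRep _ (ρ.comp (conjHom H K (Quotient.out q))) k) (resLinear H K ρ x q) := by
  apply Subtype.ext
  funext k'
  show x.1 ((↑k : G)⁻¹ * (↑k' * (Quotient.out q)⁻¹))
      = x.1 (↑(k⁻¹ * k') * (Quotient.out q)⁻¹)
  push_cast
  rw [mul_assoc]


/-- Mackey's double coset theorem.  For subgroups `K, H ≤ G` with `H` of
finite index and a finite-dimensional complex representation `ρ` of `H`, we have
`Res_K^G Ind_H^G ρ ≅ ⊕_{g ∈ H\G/K} Ind_{K ∩ g⁻¹Hg}^K ρ^g`, where `ρ^g(x) = ρ(g·x·g⁻¹)`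
and the sum runs over representatives `g = q.out` of the double cosets `H\G/K`. -/
theorem mackey_double_coset_theorem {G : Type*} [Group G] (H K : Subgroup G)
    [H.FiniteIndex] {V : Type*} [AddCommGroup V] [Module ℂ V] [FiniteDimensional ℂ V]
    (ρ : Representation ℂ ↥H V) :
    ∃ e : ↥(indCarrier H ρ) ≃ₗ[ℂ]
        ⨁ (q : DoubleCoset.Quotient (↑H : Set G) (↑K : Set G)),
          ↥(indCarrier ((Subgroup.map (MulAut.conj (Quotient.out q)⁻¹).toMonoidHom
              H).subgroupOf K) (ρ.comp (conjHom H K (Quotient.out q)))),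
      ∀ (k : ↥K) (x : ↥(indCarrier H ρ)),
        e ((indRep H ρ) (↑k : G) x) =
          DFinsupp.mapRange.linearMap
            (fun q => ((indRep _ (ρ.comp (conjHom H K (Quotient.out q))) k) : _ →ₗ[ℂ] _))
            (e x) := by
  classical
  haveI : Fintype (DoubleCoset.Quotient (↑H : Set G) (↑K : Set G)) := Fintype.ofFinite _
  let M : DoubleCoset.Quotient (↑H : Set G) (↑K : Set G) → Type _ := fun q =>
    ↥(indCarrier ((Subgroup.map (MulAut.conj (Quotient.out q)⁻¹).toMonoidHom
        H).subgroupOf K) (ρ.comp (conjHom H K (Quotient.out q))))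
  let E1 := LinearEquiv.ofBijective (resLinear H K ρ)
    ⟨resLinear_injective H K ρ, resLinear_surjective H K ρ⟩
  let E2 := (DirectSum.linearEquivFunOnFintype ℂ _ M).symm
  have hsymm : ∀ (v : ∀ q, M q) q, (E2 v) q = v q := by
    intro v q
    conv_rhs => rw [← (DirectSum.linearEquivFunOnFintype ℂ _ M).apply_symm_apply v]
    rfl
  refine ⟨E1.trans E2, ?_⟩
  intro k x
  refine DFinsupp.ext fun q => ?_
  show (E2 (resLinear H K ρ ((indRep H ρ) (↑k : G) x))) q = _
  rw [hsymm]
  erw [DFinsupp.mapRange.linearMap_apply]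
  erw [DFinsupp.mapRange_apply]
  show _ = (indRep _ (ρ.comp (conjHom H K (Quotient.out q))) k)
      ((E2 (resLinear H K ρ x)) q)
  rw [hsymm]
  exact resLinear_equivariant H K ρ k x q
end
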